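/- In the Maximal Covering Network Design problem, the projection onto the design and coverage variables (x,y,z) of the feasible set where flow variables f are required to be binary equals the projection of the feasible set where flow variables are only required to be nonnegative reals. -/

import Mathlib

namespace Stmt2

variable {V E W : Type*}

/-- Source of an arc: an arc is an edge together with an orientation. -/
def arcSrc (ends : E → V × V) : E × Bool → V
  | (e, true) => (ends e).1
  | (e, false) => (ends e).2

/-- Destination of an arc. -/
def arcDst (ends : E → V × V) : E × Bool → V
  | (e, true) => (ends e).2
  | (e, false) => (ends e).1

/-- Divergence (net outflow) of `f` at vertex `v`. -/
def divg [Fintype E] [DecidableEq V] (ends : E → V × V) (f : E × Bool → ℝ) (v : V) : ℝ :=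
  (∑ a : E × Bool, if arcSrc ends a = v then f a else 0)
    - (∑ a : E × Bool, if arcDst ends a = v then f a else 0)

/-- All constraints of the Maximal Covering Network Design formulation except the
integrality / nonnegativity requirement on the flow variables `f`. -/
def MCFeasCore [Fintype V] [Fintype E] [Fintype W] [DecidableEq V]
    (ends : E → V × V) (c : E → ℝ) (b : V → ℝ) (d : E × Bool → ℝ)
    (u : W → ℝ) (orig dest : W → V) (Cmax : ℝ)
    (x : E → ℝ) (y : V → ℝ) (z : W → ℝ) (f : W → E × Bool → ℝ) : Prop :=
  ((∑ e : E, c e * x e) + (∑ i : V, b i * y i) ≤ Cmax) ∧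
  (∀ e : E, x e ≤ y (ends e).1 ∧ x e ≤ y (ends e).2) ∧
  (∀ e : E, x e = 0 ∨ x e = 1) ∧ (∀ i : V, y i = 0 ∨ y i = 1) ∧
  (∀ w : W, z w = 0 ∨ z w = 1) ∧
  (∀ (w : W) (v : V), divg ends (f w) v =
      if v = orig w then z w else if v = dest w then -(z w) else 0) ∧
  (∀ (w : W) (e : E), f w (e, true) + f w (e, false) ≤ x e) ∧
  (∀ w : W, ∑ a : E × Bool, d a * f w a ≤ u w * z w)

section Walks

variable (ends : E → V × V)

/-- A walk from `u` to `w` using arcs satisfying `P`. -/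
inductive IsWalk (P : E × Bool → Prop) : V → V → List (E × Bool) → Prop
  | nil (v : V) : IsWalk P v v []
  | cons {u w : V} {a : E × Bool} {l : List (E × Bool)} :
      P a → arcSrc ends a = u → IsWalk P (arcDst ends a) w l → IsWalk P u w (a :: l)

variable {ends}

lemma IsWalk.mono {P Q : E × Bool → Prop} (hPQ : ∀ a, P a → Q a) :
    ∀ {u w l}, IsWalk ends P u w l → IsWalk ends Q u w l := by
  intro u w l h
  induction h with
  | nil v => exact IsWalk.nil v
  | cons ha hs _ ih => exact IsWalk.cons (hPQ _ ha) hs ih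

lemma IsWalk.eq_of_nil {P : E × Bool → Prop} {u w : V} (h : IsWalk ends P u w []) : u = w := by
  cases h; rfl

lemma IsWalk.mem_arcs {P : E × Bool → Prop} {u w l} (h : IsWalk ends P u w l) :
    ∀ a ∈ l, P a := by
  induction h with
  | nil => simp
  | cons ha hs _ ih =>
    intro a' ha'
    rcases List.mem_cons.1 ha' with rfl | h'
    · exact ha
    · exact ih a' h'

/-- From a vertex on the walk, some suffix of the walk goes to the end. -/
lemma IsWalk.suffix_from {P : E × Bool → Prop} {u w l} (h : IsWalk ends P u w l)
    {x : V} (hx : x ∈ u :: l.map (arcDst ends)) :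
    ∃ l', IsWalk ends P x w l' ∧ l' <:+ l ∧
      (x :: l'.map (arcDst ends)) <:+ (u :: l.map (arcDst ends)) := by
  induction h with
  | nil v =>
    simp only [List.map_nil, List.mem_singleton] at hx
    subst hx
    exact ⟨[], IsWalk.nil _, List.nil_suffix, List.suffix_refl _⟩
  | @cons u' w' a l' ha hs hw ih =>
    rcases List.mem_cons.1 hx with rfl | hx'
    · exact ⟨a :: l', IsWalk.cons ha hs hw, List.suffix_refl _, List.suffix_refl _⟩
    · have hx'' : x ∈ arcDst ends a :: l'.map (arcDst ends) := by
        simpa using hx'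
      obtain ⟨l'', hw'', hsuf, hvsuf⟩ := ih hx''
      refine ⟨l'', hw'', hsuf.trans (List.suffix_cons _ _), ?_⟩
      refine hvsuf.trans ?_
      have : (arcDst ends a :: l'.map (arcDst ends)) <:+ (u' :: (a :: l').map (arcDst ends)) := by
        simp only [List.map_cons]
        exact List.suffix_cons _ _
      exact this

/-- Loop erasure: any walk contains a vertex-simple walk with the same endpoints. -/
lemma IsWalk.simplify {P : E × Bool → Prop} {u w l} (h : IsWalk ends P u w l) :
    ∃ l', IsWalk ends P u w l' ∧ (∀ a ∈ l', a ∈ l) ∧ (u :: l'.map (arcDst ends)).Nodup := by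
  induction h with
  | nil v => exact ⟨[], IsWalk.nil _, by simp, by simp⟩
  | @cons u' w' a l' ha hs hw ih =>
    obtain ⟨l₂, hw₂, hsub₂, hnd₂⟩ := ih
    by_cases hu : u' ∈ arcDst ends a :: l₂.map (arcDst ends)
    · obtain ⟨l₃, hw₃, hsuf, hvsuf⟩ := hw₂.suffix_from hu
      refine ⟨l₃, hw₃, ?_, hvsuf.sublist.nodup hnd₂⟩
      intro a' ha'
      exact List.mem_cons_of_mem _ (hsub₂ _ (hsuf.subset ha'))
    · refine ⟨a :: l₂, IsWalk.cons ha hs hw₂, ?_, ?_⟩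
      · intro a' ha'
        rcases List.mem_cons.1 ha' with rfl | h'
        · exact List.mem_cons_self
        · exact List.mem_cons_of_mem _ (hsub₂ _ h')
      · rw [List.map_cons]
        exact List.nodup_cons.2 ⟨hu, hnd₂⟩

/-- On a vertex-simple walk, an edge is not used in both directions. -/
lemma IsWalk.not_both {P : E × Bool → Prop} {u w l} (h : IsWalk ends P u w l)
    (hnd : (u :: l.map (arcDst ends)).Nodup) (e : E) :
    ¬ ((e, true) ∈ l ∧ (e, false) ∈ l) := by
  induction h with
  | nil => simp
  | @cons u' w' a l' ha hs hw ih =>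
    rw [List.map_cons] at hnd
    obtain ⟨hnd1, hnd2⟩ := List.nodup_cons.1 hnd
    rintro ⟨ht, hf⟩
    have hu' : u' ∉ l'.map (arcDst ends) := fun hh => hnd1 (List.mem_cons_of_mem _ hh)
    rcases List.mem_cons.1 ht with rfl | ht'
    · -- a = (e, true); then (e,false) ∈ l' and its dst is u'
      have hf' : (e, false) ∈ l' := by
        rcases List.mem_cons.1 hf with h' | h'
        · exact absurd h' (by simp)
        · exact h'
      apply hu'
      have : arcDst ends (e, false) = u' := by
        rw [← hs]; rfl
      exact this ▸ List.mem_map_of_mem hf'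
    · rcases List.mem_cons.1 hf with rfl | hf'
      · apply hu'
        have : arcDst ends (e, true) = u' := by
          rw [← hs]; rfl
        exact this ▸ List.mem_map_of_mem ht'
      · exact ih hnd2 ⟨ht', hf'⟩

end Walks

section Divg

open scoped Classical

variable [Fintype E] [DecidableEq V] {ends : E → V × V}

lemma divg_add (f g : E × Bool → ℝ) (v : V) :
    divg ends (fun a => f a + g a) v = divg ends f v + divg ends g v := by
  unfold divg
  have h1 : ∀ s : E × Bool → V,
      (∑ a : E × Bool, if s a = v then f a + g a else 0)
        = (∑ a : E × Bool, if s a = v then f a else 0)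
          + ∑ a : E × Bool, if s a = v then g a else 0 := by
    intro s
    rw [← Finset.sum_add_distrib]
    exact Finset.sum_congr rfl fun a _ => by split <;> ring
  rw [h1, h1]; ring

lemma divg_smul (c : ℝ) (f : E × Bool → ℝ) (v : V) :
    divg ends (fun a => c * f a) v = c * divg ends f v := by
  unfold divg
  have h1 : ∀ s : E × Bool → V,
      (∑ a : E × Bool, if s a = v then c * f a else 0)
        = c * ∑ a : E × Bool, if s a = v then f a else 0 := by
    intro s
    rw [Finset.mul_sum]
    exact Finset.sum_congr rfl fun a _ => by split <;> ring
  rw [h1, h1]; ring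

lemma divg_sub_mul (g h : E × Bool → ℝ) (c : ℝ) (v : V) :
    divg ends (fun a => g a - c * h a) v = divg ends g v - c * divg ends h v := by
  have : (fun a => g a - c * h a) = fun a => g a + (-c) * h a := by
    funext a; ring
  rw [this, divg_add, divg_smul]; ring

lemma divg_single (a : E × Bool) (v : V) :
    divg ends (fun a' => if a' = a then (1:ℝ) else 0) v
      = (if v = arcSrc ends a then 1 else 0) - (if v = arcDst ends a then 1 else 0) := by
  unfold divg
  have h1 : ∀ s : E × Bool → V,
      (∑ a' : E × Bool, if s a' = v then (if a' = a then (1:ℝ) else 0) else 0)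
        = if v = s a then 1 else 0 := by
    intro s
    rw [Finset.sum_eq_single a]
    · simp [eq_comm]
    · intro b _ hb; simp [hb]
    · simp
  rw [h1, h1]

lemma divg_indFlow {P : E × Bool → Prop} {u w : V} {l : List (E × Bool)}
    (h : IsWalk ends P u w l) (hnd : l.Nodup) (v : V) :
    divg ends (fun a => if a ∈ l then (1:ℝ) else 0) v
      = (if v = u then 1 else 0) - (if v = w then 1 else 0) := by
  induction h with
  | nil => simp [divg]
  | @cons u' w' a l' ha hs hw ih =>
    obtain ⟨hal, hnd'⟩ := List.nodup_cons.1 hnd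
    have heq : (fun a' => if a' ∈ a :: l' then (1:ℝ) else 0)
        = fun a' => (if a' ∈ l' then (1:ℝ) else 0) + (if a' = a then 1 else 0) := by
      funext a'
      by_cases h1 : a' = a
      · subst h1; simp [hal]
      · simp [h1, List.mem_cons]
    rw [heq, divg_add, ih hnd', divg_single, ← hs]
    by_cases h1 : v = arcSrc ends a <;> by_cases h2 : v = arcDst ends a <;>
      by_cases h3 : v = w' <;> simp [h1, h2, h3] <;> ring

lemma sum_ind (c : E × Bool → ℝ) (l : List (E × Bool)) (hnd : l.Nodup) :
    (∑ a : E × Bool, if a ∈ l then c a else 0) = (l.map c).sum := by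
  have h1 : (∑ a : E × Bool, if a ∈ l then c a else 0)
      = ∑ a : E × Bool, if a ∈ l.toFinset then c a else 0 :=
    Finset.sum_congr rfl fun a _ => by simp
  rw [h1, Finset.sum_ite_mem, Finset.univ_inter, List.sum_toFinset c hnd]

end Divg

section Reach

open scoped Classical

variable [Fintype V] [Fintype E] [DecidableEq V] {ends : E → V × V}

lemma exists_walk (g : E × Bool → ℝ) (hg : ∀ a, 0 ≤ g a) {vval : ℝ} (hv : 0 < vval)
    {s t : V}
    (hdiv : ∀ x, divg ends g x
      = vval * ((if x = s then 1 else 0) - (if x = t then 1 else 0))) :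
    ∃ l, IsWalk ends (fun a => 0 < g a) s t l := by
  set r : V → V → Prop := fun p q => ∃ a, 0 < g a ∧ arcSrc ends a = p ∧ arcDst ends a = q
    with hr
  suffices hreach : Relation.ReflTransGen r s t by
    clear hdiv
    induction hreach using Relation.ReflTransGen.head_induction_on with
    | refl => exact ⟨[], IsWalk.nil _⟩
    | head hstep _ ih =>
      obtain ⟨a, hga, hsrc, hdst⟩ := hstep
      obtain ⟨l, hl⟩ := ih
      exact ⟨a :: l, IsWalk.cons hga hsrc (hdst ▸ hl)⟩
  by_contra hnt
  set S : Finset V := Finset.univ.filter (fun x => Relation.ReflTransGen r s x) with hS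
  have hsS : s ∈ S := by simp [hS]; exact Relation.ReflTransGen.refl
  have htS : t ∉ S := by simp [hS]; exact hnt
  have hclosed : ∀ a : E × Bool, 0 < g a → arcSrc ends a ∈ S → arcDst ends a ∈ S := by
    intro a hga hmem
    simp only [hS, Finset.mem_filter, Finset.mem_univ, true_and] at hmem ⊢
    exact hmem.tail ⟨a, hga, rfl, rfl⟩
  have hswap : ∀ sfun : E × Bool → V,
      (∑ x ∈ S, ∑ a : E × Bool, if sfun a = x then g a else 0)
        = ∑ a : E × Bool, if sfun a ∈ S then g a else 0 := by
    intro sfun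
    rw [Finset.sum_comm]
    exact Finset.sum_congr rfl fun a _ => Finset.sum_ite_eq S (sfun a) (fun _ => g a)
  have hle : (∑ x ∈ S, divg ends g x) ≤ 0 := by
    unfold divg
    rw [Finset.sum_sub_distrib, hswap, hswap, ← Finset.sum_sub_distrib]
    refine Finset.sum_nonpos fun a _ => ?_
    by_cases hga : 0 < g a
    · by_cases hsrc : arcSrc ends a ∈ S
      · simp [hsrc, hclosed a hga hsrc]
      · have : (0:ℝ) ≤ if arcDst ends a ∈ S then g a else 0 := by
          split
          · exact le_of_lt hga
          · exact le_refl 0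
        simp only [hsrc, if_false]
        linarith
    · have h0 : g a = 0 := le_antisymm (not_lt.1 hga) (hg a)
      simp [h0]
  have hgt : (∑ x ∈ S, divg ends g x) = vval := by
    have h1 : (∑ x ∈ S, (if x = s then (1:ℝ) else 0)) = 1 := by
      rw [Finset.sum_ite_eq' S s (fun _ => (1:ℝ))]
      simp [hsS]
    have h2 : (∑ x ∈ S, (if x = t then (1:ℝ) else 0)) = 0 := by
      rw [Finset.sum_ite_eq' S t (fun _ => (1:ℝ))]
      simp [htS]
    calc (∑ x ∈ S, divg ends g x)
        = ∑ x ∈ S, vval * ((if x = s then 1 else 0) - (if x = t then 1 else 0)) :=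
          Finset.sum_congr rfl fun x _ => hdiv x
      _ = vval * ((∑ x ∈ S, (if x = s then (1:ℝ) else 0))
            - ∑ x ∈ S, (if x = t then (1:ℝ) else 0)) := by
          rw [← Finset.mul_sum, Finset.sum_sub_distrib]
      _ = vval := by rw [h1, h2]; ring
  linarith

end Reach

section Extract

open scoped Classical

variable [Fintype V] [Fintype E] [DecidableEq V] {ends : E → V × V}

lemma exists_cheap_path (d : E × Bool → ℝ) (hd : ∀ a, 0 ≤ d a) :
    ∀ (n : ℕ) (g : E × Bool → ℝ),
      (Finset.univ.filter (fun a => g a ≠ 0)).card ≤ n →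
      (∀ a, 0 ≤ g a) → ∀ vval : ℝ, 0 < vval → ∀ s t : V, s ≠ t →
      (∀ x, divg ends g x
        = vval * ((if x = s then 1 else 0) - (if x = t then 1 else 0))) →
      ∃ l : List (E × Bool), IsWalk ends (fun a => 0 < g a) s t l ∧
        (s :: l.map (arcDst ends)).Nodup ∧
        vval * (l.map d).sum ≤ ∑ a : E × Bool, d a * g a := by
  intro n
  induction n with
  | zero =>
    intro g hcard hg vval hv s t hst hdiv
    exfalso
    obtain ⟨l0, hw0⟩ := exists_walk g hg hv hdiv
    have hl0 : l0 ≠ [] := by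
      rintro rfl
      exact hst hw0.eq_of_nil
    obtain ⟨a, hal⟩ := List.exists_mem_of_ne_nil l0 hl0
    have hga : 0 < g a := hw0.mem_arcs a hal
    have : a ∈ Finset.univ.filter (fun a => g a ≠ 0) := by
      simp [ne_of_gt hga]
    have := Finset.card_pos.2 ⟨a, this⟩
    omega
  | succ n ih =>
    intro g hcard hg vval hv s t hst hdiv
    obtain ⟨l0, hw0⟩ := exists_walk g hg hv hdiv
    obtain ⟨l, hw, hsubl, hndv⟩ := hw0.simplify
    have hwg : IsWalk ends (fun a => 0 < g a) s t l := hw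
    have hnddst : (l.map (arcDst ends)).Nodup := (List.nodup_cons.1 hndv).2
    have hndl : l.Nodup := hnddst.of_map
    have hl : l ≠ [] := by
      rintro rfl
      exact hst hw.eq_of_nil
    obtain ⟨a1, ha1⟩ := List.exists_mem_of_ne_nil l hl
    obtain ⟨a₀, ha₀l, ha₀min⟩ :=
      Finset.exists_min_image l.toFinset g ⟨a1, List.mem_toFinset.2 ha1⟩
    have ha₀l' : a₀ ∈ l := List.mem_toFinset.1 ha₀l
    have hmin : ∀ a ∈ l, g a₀ ≤ g a := fun a ha => ha₀min a (List.mem_toFinset.2 ha)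
    have hε : 0 < g a₀ := hwg.mem_arcs a₀ ha₀l'
    have hindsum : ∀ c : E × Bool → ℝ,
        (∑ a : E × Bool, if a ∈ l then c a else 0) = (l.map c).sum :=
      fun c => sum_ind c l hndl
    by_cases hcase : vval ≤ g a₀
    · refine ⟨l, hwg, hndv, ?_⟩
      have key : 0 ≤ ∑ a : E × Bool,
          (d a * g a - vval * (if a ∈ l then d a else 0)) := by
        refine Finset.sum_nonneg fun a _ => ?_
        by_cases hal : a ∈ l
        · have h1 : vval ≤ g a := le_trans hcase (hmin a hal)
          simp only [hal, if_true]
          have := mul_nonneg (hd a) (sub_nonneg.2 h1)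
          nlinarith [hd a]
        · simp only [hal, if_false]
          have := mul_nonneg (hd a) (hg a)
          linarith
      rw [Finset.sum_sub_distrib, ← Finset.mul_sum, hindsum d] at key
      linarith
    · push_neg at hcase
      set ε := g a₀ with hεdef
      set g' : E × Bool → ℝ := fun a => g a - ε * (if a ∈ l then 1 else 0) with hg'def
      have hg'nn : ∀ a, 0 ≤ g' a := by
        intro a
        by_cases hal : a ∈ l
        · have := hmin a hal
          simp [hg'def, hal]
          linarith
        · simp [hg'def, hal]
          exact hg a
      have hg'le : ∀ a, g' a ≤ g a := by
        intro a
        have : 0 ≤ ε * (if a ∈ l then (1:ℝ) else 0) := by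
          apply mul_nonneg (le_of_lt hε)
          split <;> norm_num
        simp only [hg'def]
        linarith
      have hdiv' : ∀ x, divg ends g' x
          = (vval - ε) * ((if x = s then 1 else 0) - (if x = t then 1 else 0)) := by
        intro x
        simp only [hg'def]
        rw [divg_sub_mul, hdiv, divg_indFlow hwg hndl]
        ring
      have hsub : (Finset.univ.filter (fun a => g' a ≠ 0))
          ⊆ Finset.univ.filter (fun a => g a ≠ 0) := by
        intro a ha
        simp only [Finset.mem_filter, Finset.mem_univ, true_and] at ha ⊢
        by_cases hal : a ∈ l
        · exact ne_of_gt (hwg.mem_arcs a hal)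
        · simp [hg'def, hal] at ha
          exact ha
      have ha₀mem : a₀ ∈ Finset.univ.filter (fun a => g a ≠ 0) := by
        simp [ne_of_gt hε]
        exact hε.ne'
      have ha₀notmem : a₀ ∉ Finset.univ.filter (fun a => g' a ≠ 0) := by
        simp [hg'def, ha₀l']
        exact sub_self _
      have hss : (Finset.univ.filter (fun a => g' a ≠ 0))
          ⊂ Finset.univ.filter (fun a => g a ≠ 0) :=
        ⟨hsub, fun hsup => ha₀notmem (hsup ha₀mem)⟩
      have hcard' : (Finset.univ.filter (fun a => g' a ≠ 0)).card ≤ n := by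
        have := Finset.card_lt_card hss
        omega
      obtain ⟨l', hw', hnd', hcost'⟩ :=
        ih g' hcard' hg'nn (vval - ε) (by linarith) s t hst hdiv'
      have hw'' : IsWalk ends (fun a => 0 < g a) s t l' :=
        hw'.mono fun a ha => lt_of_lt_of_le ha (hg'le a)
      have hcostg' : (∑ a : E × Bool, d a * g' a)
          = (∑ a : E × Bool, d a * g a) - ε * (l.map d).sum := by
        have h1 : (∑ a : E × Bool, d a * g' a)
            = ∑ a : E × Bool, (d a * g a - ε * (if a ∈ l then d a else 0)) := by
          refine Finset.sum_congr rfl fun a _ => ?_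
          simp only [hg'def]
          split <;> ring
        rw [h1, Finset.sum_sub_distrib, ← Finset.mul_sum, hindsum d]
      rw [hcostg'] at hcost'
      by_cases hll : (l.map d).sum ≤ (l'.map d).sum
      · refine ⟨l, hwg, hndv, ?_⟩
        have k1 : (vval - ε) * (l.map d).sum ≤ (vval - ε) * (l'.map d).sum :=
          mul_le_mul_of_nonneg_left hll (by linarith)
        nlinarith
      · refine ⟨l', hw'', hnd', ?_⟩
        push_neg at hll
        have k1 : ε * (l'.map d).sum ≤ ε * (l.map d).sum :=
          mul_le_mul_of_nonneg_left (le_of_lt hll) (le_of_lt hε)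
        nlinarith

end Extract

/-- the projection onto `(x, y, z)` of the feasible set of (MC) with
binary flow variables equals the projection of the feasible set with flow variables
only required to be nonnegative. -/
theorem projection_eq [Fintype V] [Fintype E] [Fintype W] [DecidableEq V]
    (ends : E → V × V) (c : E → ℝ) (b : V → ℝ) (d : E × Bool → ℝ)
    (u : W → ℝ) (orig dest : W → V) (Cmax : ℝ)
    (hd : ∀ a, 0 ≤ d a) (hod : ∀ w, orig w ≠ dest w) :
    {p : (E → ℝ) × (V → ℝ) × (W → ℝ) |
        ∃ f : W → E × Bool → ℝ,
          MCFeasCore ends c b d u orig dest Cmax p.1 p.2.1 p.2.2 f ∧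
          ∀ (w : W) (a : E × Bool), f w a = 0 ∨ f w a = 1} =
    {p : (E → ℝ) × (V → ℝ) × (W → ℝ) |
        ∃ f : W → E × Bool → ℝ,
          MCFeasCore ends c b d u orig dest Cmax p.1 p.2.1 p.2.2 f ∧
          ∀ (w : W) (a : E × Bool), 0 ≤ f w a} := by
  classical
  ext p
  obtain ⟨x, y, z⟩ := p
  simp only [Set.mem_setOf_eq]
  constructor
  · rintro ⟨f, hfeas, hbin⟩
    refine ⟨f, hfeas, fun w a => ?_⟩
    rcases hbin w a with h | h <;> simp [h]
  · rintro ⟨f, ⟨hbud, hxy, hx, hy, hz, hdivg, hcap, hlen⟩, hnn⟩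
    have hx0 : ∀ e, (0:ℝ) ≤ x e := by
      intro e; rcases hx e with h | h <;> simp [h]
    have key : ∀ w : W, ∃ fw : E × Bool → ℝ,
        (∀ v, divg ends fw v =
          if v = orig w then z w else if v = dest w then -(z w) else 0) ∧
        (∀ e, fw (e, true) + fw (e, false) ≤ x e) ∧
        (∑ a : E × Bool, d a * fw a ≤ u w * z w) ∧
        (∀ a, fw a = 0 ∨ fw a = 1) := by
      intro w
      rcases hz w with h0 | h1
      · refine ⟨fun _ => 0, ?_, ?_, ?_, fun a => Or.inl rfl⟩
        · intro v
          simp [divg, h0]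
        · intro e
          simpa using hx0 e
        · simp [h0]
      · set s := orig w with hs
        set t := dest w with ht
        have hst : s ≠ t := hod w
        have hdivw : ∀ v, divg ends (f w) v
            = 1 * ((if v = s then 1 else 0) - (if v = t then 1 else 0)) := by
          intro v
          rw [hdivg w v, h1]
          by_cases h1' : v = s <;> by_cases h2' : v = t
          · exact absurd (h1' ▸ h2') hst
          · simp [h1', h2', ← hs, ← ht, hst, Ne.symm hst]
          · simp [h1', h2', ← hs, ← ht, hst, Ne.symm hst]
          · simp [h1', h2', ← hs, ← ht, hst, Ne.symm hst]
        obtain ⟨l, hwl, hndv, hcost⟩ :=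
          exists_cheap_path (ends := ends) d hd
            (Finset.univ.filter (fun a => f w a ≠ 0)).card (f w) le_rfl
            (hnn w) 1 one_pos s t hst hdivw
        have hnddst : (l.map (arcDst ends)).Nodup := (List.nodup_cons.1 hndv).2
        have hndl : l.Nodup := hnddst.of_map
        refine ⟨fun a => if a ∈ l then 1 else 0, ?_, ?_, ?_, ?_⟩
        · intro v
          rw [divg_indFlow hwl hndl, h1]
          by_cases h1' : v = s <;> by_cases h2' : v = t
          · exact absurd (h1' ▸ h2') hst
          · simp [h1', h2', ← hs, ← ht, hst, Ne.symm hst]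
          · simp [h1', h2', ← hs, ← ht, hst, Ne.symm hst]
          · simp [h1', h2', ← hs, ← ht, hst, Ne.symm hst]
        · intro e
          show (if (e, true) ∈ l then (1:ℝ) else 0)
              + (if (e, false) ∈ l then (1:ℝ) else 0) ≤ x e
          have hnb := hwl.not_both hndv e
          have hone : ∀ a ∈ l, x e = 1 → True := fun _ _ _ => trivial
          have hxe1 : ∀ a : E × Bool, a ∈ l → a.1 = e → x e = 1 := by
            rintro ⟨e', bb⟩ hal rfl
            have hga : 0 < f w (e', bb) := hwl.mem_arcs _ hal
            have hcap' := hcap w e'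
            have h1' := hnn w (e', true)
            have h2' := hnn w (e', false)
            rcases hx e' with h | h
            · exfalso
              rw [h] at hcap'
              cases bb <;> linarith
            · exact h
          by_cases hT : (e, true) ∈ l <;> by_cases hF : (e, false) ∈ l
          · exact absurd ⟨hT, hF⟩ hnb
          · rw [if_pos hT, if_neg hF, hxe1 (e, true) hT rfl]; norm_num
          · rw [if_neg hT, if_pos hF, hxe1 (e, false) hF rfl]; norm_num
          · rw [if_neg hT, if_neg hF]
            simpa using hx0 e
        · have h1' : (∑ a : E × Bool, d a * (if a ∈ l then (1:ℝ) else 0))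
              = ∑ a : E × Bool, (if a ∈ l then d a else 0) :=
            Finset.sum_congr rfl fun a _ => by split <;> ring
          rw [h1', sum_ind d l hndl, h1]
          have := hlen w
          rw [h1] at this
          linarith
        · intro a
          show (if a ∈ l then (1:ℝ) else 0) = 0 ∨ (if a ∈ l then (1:ℝ) else 0) = 1
          split
          · exact Or.inr rfl
          · exact Or.inl rfl
    choose f' hf' using key
    exact ⟨f', ⟨hbud, hxy, hx, hy, hz, fun w v => (hf' w).1 v,
      fun w e => (hf' w).2.1 e, fun w => (hf' w).2.2.1⟩,
      fun w a => (hf' w).2.2.2 a⟩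


end Stmt2
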